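/- arXiv:1808.03214 — 3 statements merged into one kernel-verified Lean document; each statement's English description precedes it below -/
import Mathlib

section
/- With the setup of the quotient ring A = R[η]/(η^k + s_1 η^{k-1} + ... + s_k) where s_i = s_i(x_1,...,x_k) are the elementary symmetric polynomials in variables x_1,...,x_k over a base ring, and writing η^{d+k-1} = ∑_{i=0}^{k-1} q_{d,i} η^{k-1-i}, one has (-1)^d · q_{d,i} = ∑_{j=1}^{d} (-1)^{j-1} s_{i+j} · p_{d-j}, where p_j = p_j(x_1,...,x_k) is the complete homogeneous symmetric polynomial of degree j (p_0 = 1) and s_j = 0 for j > k. -/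
set_option maxRecDepth 4000

open Finset Polynomial MvPolynomial

/-- The complete homogeneous symmetric polynomial of degree `d` in `k` variables. -/
noncomputable def hsymm (k d : ℕ) : MvPolynomial (Fin k) ℤ :=
  ∑ f ∈ Finset.Nat.antidiagonalTuple k d, ∏ i, MvPolynomial.X i ^ f i


lemma hsymm_zero' (k : ℕ) : _root_.hsymm k 0 = 1 := by
  simp [_root_.hsymm, Finset.Nat.antidiagonalTuple_zero_right]

lemma geom (k : ℕ) (x : MvPolynomial (Fin k) ℤ) :
    (1 - PowerSeries.C x * PowerSeries.X) * PowerSeries.mk (fun d => x ^ d) = 1 := by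
  apply PowerSeries.ext
  intro n
  rw [sub_mul, one_mul, map_sub, mul_assoc]
  cases n with
  | zero => simp
  | succ n =>
    rw [PowerSeries.coeff_C_mul, PowerSeries.coeff_succ_X_mul]
    simp [pow_succ, mul_comm, PowerSeries.coeff_one]

lemma coeffH (k d : ℕ) :
    PowerSeries.coeff d (∏ i : Fin k, PowerSeries.mk fun e =>
      (MvPolynomial.X i : MvPolynomial (Fin k) ℤ) ^ e) = _root_.hsymm k d := by
  rw [PowerSeries.coeff_prod]
  simp only [PowerSeries.coeff_mk]
  rw [_root_.hsymm]
  refine Finset.sum_nbij' (fun l => (l : Fin k → ℕ)) (fun f => Finsupp.equivFunOnFinite.symm f)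
    ?_ ?_ ?_ ?_ ?_
  · intro l hl
    rw [Finset.mem_finsuppAntidiag] at hl
    rw [Finset.Nat.mem_antidiagonalTuple]
    exact hl.1
  · intro f hf
    rw [Finset.Nat.mem_antidiagonalTuple] at hf
    rw [Finset.mem_finsuppAntidiag]
    constructor
    · simpa using hf
    · exact Finset.subset_univ _
  · intro l _; ext i; simp
  · intro f _; ext i; simp
  · intro l _; rfl

lemma coeffE (k j : ℕ) :
    PowerSeries.coeff j (∏ i : Fin k, (1 - PowerSeries.C
      (MvPolynomial.X i : MvPolynomial (Fin k) ℤ) * PowerSeries.X))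
      = (-1 : MvPolynomial (Fin k) ℤ)^j * esymm (Fin k) ℤ j := by
  have h1 : ∀ i : Fin k, (1 - PowerSeries.C
      (MvPolynomial.X i : MvPolynomial (Fin k) ℤ) * PowerSeries.X)
      = -(PowerSeries.C (MvPolynomial.X i) * PowerSeries.X) + 1 := by
    intro i; ring
  simp only [h1]
  rw [Finset.prod_add]
  simp only [Finset.prod_const_one, mul_one]
  have hneg : ∀ t : Finset (Fin k), (∏ i ∈ t, (-(MvPolynomial.X i) : MvPolynomial (Fin k) ℤ))
      = (-1)^t.card * ∏ i ∈ t, MvPolynomial.X i := by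
    intro t
    have : ∀ i ∈ t, (-(MvPolynomial.X i) : MvPolynomial (Fin k) ℤ) = (-1) * MvPolynomial.X i := by
      intro i _; ring
    rw [Finset.prod_congr rfl this, Finset.prod_mul_distrib, Finset.prod_const]
  have h2 : ∀ t : Finset (Fin k),
      (∏ i ∈ t, -(PowerSeries.C (MvPolynomial.X i : MvPolynomial (Fin k) ℤ) * PowerSeries.X))
      = (PowerSeries.C ((-1)^t.card * ∏ i ∈ t, MvPolynomial.X i) * PowerSeries.X ^ t.card) := by
    intro t
    have e1 : ∀ i ∈ t, -(PowerSeries.C (MvPolynomial.X i : MvPolynomial (Fin k) ℤ) * PowerSeries.X)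
        = PowerSeries.C (-(MvPolynomial.X i)) * PowerSeries.X := by
      intro i _; rw [map_neg, neg_mul]
    rw [Finset.prod_congr rfl e1, Finset.prod_mul_distrib, Finset.prod_const, ← map_prod, hneg]
  simp only [h2]
  rw [map_sum]
  have h3 : ∀ t : Finset (Fin k), PowerSeries.coeff j
      (PowerSeries.C ((-1)^t.card * ∏ i ∈ t, MvPolynomial.X i) * PowerSeries.X ^ t.card)
      = if t.card = j then (-1 : MvPolynomial (Fin k) ℤ)^j * ∏ i ∈ t, MvPolynomial.X i else 0 := by
    intro t
    rw [PowerSeries.coeff_C_mul, PowerSeries.coeff_X_pow]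
    split
    · next h => subst h; simp
    · next h => simp [Ne.symm h]
  simp only [h3]
  rw [← Finset.sum_filter, ← Finset.powersetCard_eq_filter, esymm, Finset.mul_sum]

lemma EH (k n : ℕ) (hn : 1 ≤ n) :
    ∑ j ∈ range (n+1), (-1 : MvPolynomial (Fin k) ℤ)^j * esymm (Fin k) ℤ j
      * _root_.hsymm k (n-j) = 0 := by
  have hEH : (∏ i : Fin k, (1 - PowerSeries.C
        (MvPolynomial.X i : MvPolynomial (Fin k) ℤ) * PowerSeries.X))
      * (∏ i : Fin k, PowerSeries.mk fun e =>
        (MvPolynomial.X i : MvPolynomial (Fin k) ℤ) ^ e) = 1 := by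
    rw [← Finset.prod_mul_distrib]
    rw [Finset.prod_congr rfl (fun i _ => geom k (MvPolynomial.X i))]
    exact Finset.prod_const_one
  have h0 := congrArg (PowerSeries.coeff n) hEH
  rw [PowerSeries.coeff_mul, Finset.Nat.sum_antidiagonal_eq_sum_range_succ_mk] at h0
  simp only [coeffE, coeffH] at h0
  rw [h0, PowerSeries.coeff_one, if_neg (by omega)]

lemma hrec (k d : ℕ) (hd : 1 ≤ d) :
    _root_.hsymm k d = ∑ j ∈ range d, (-1 : MvPolynomial (Fin k) ℤ)^j
      * esymm (Fin k) ℤ (j+1) * _root_.hsymm k (d-1-j) := by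
  have h0 := EH k d hd
  rw [Finset.sum_range_succ'] at h0
  simp only [pow_zero, one_mul, esymm_zero, Nat.sub_zero] at h0
  have h1 : ∑ j ∈ range d, (-1 : MvPolynomial (Fin k) ℤ)^j
      * esymm (Fin k) ℤ (j+1) * _root_.hsymm k (d-1-j)
      = -∑ j ∈ range d, (-1 : MvPolynomial (Fin k) ℤ)^(j+1)
      * esymm (Fin k) ℤ (j+1) * _root_.hsymm k (d-(j+1)) := by
    rw [← Finset.sum_neg_distrib]
    refine Finset.sum_congr rfl fun j _ => ?_
    have : d - 1 - j = d - (j+1) := by omega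
    rw [this, pow_succ]
    ring
  rw [h1]
  exact eq_neg_of_add_eq_zero_right h0

noncomputable def Qa (k d i : ℕ) : MvPolynomial (Fin k) ℤ :=
  (-1)^d * ∑ j ∈ range d, (-1)^j * esymm (Fin k) ℤ (i+j+1) * _root_.hsymm k (d-1-j)

lemma degLT (k : ℕ) (hk : 1 ≤ k) (c : ℕ → MvPolynomial (Fin k) ℤ) :
    (∑ i ∈ range k, Polynomial.C (c i) * Polynomial.X ^ (k-1-i)).degree < (k : WithBot ℕ) := by
  apply lt_of_le_of_lt (Polynomial.degree_sum_le _ _)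
  rw [Finset.sup_lt_iff (by exact_mod_cast WithBot.bot_lt_coe k)]
  intro i hi
  exact lt_of_le_of_lt (Polynomial.degree_C_mul_X_pow_le _ _)
    (by exact_mod_cast (by omega : k-1-i < k))

lemma esymm_big (k n : ℕ) (hn : k < n) : esymm (Fin k) ℤ n = 0 := by
  rw [esymm, Finset.powersetCard_eq_empty.2 (by simpa using hn), Finset.sum_empty]

lemma Qtop (k d n : ℕ) (hn : k ≤ n) : Qa k d n = 0 := by
  simp only [Qa]
  rw [Finset.sum_eq_zero, mul_zero]
  intro j _
  rw [esymm_big k (n+j+1) (by omega)]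
  ring

lemma Qrec (k d i : ℕ) (hd : 1 ≤ d) :
    Qa k (d+1) i = Qa k d (i+1) - Qa k d 0 * esymm (Fin k) ℤ (i+1) := by
  have hQ0 : Qa k d 0 = (-1 : MvPolynomial (Fin k) ℤ)^d * _root_.hsymm k d := by
    rw [Qa, hrec k d hd]
    simp only [Nat.zero_add]
  rw [hQ0]
  rw [Qa, Qa]
  rw [Finset.sum_range_succ']
  have e1 : ∀ j ∈ range d, (-1 : MvPolynomial (Fin k) ℤ)^(j+1) * esymm (Fin k) ℤ (i+(j+1)+1)
        * _root_.hsymm k (d+1-1-(j+1))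
      = -((-1 : MvPolynomial (Fin k) ℤ)^j * esymm (Fin k) ℤ (i+1+j+1) * _root_.hsymm k (d-1-j)) := by
    intro j _
    have h1 : i+(j+1)+1 = i+1+j+1 := by omega
    have h2 : d+1-1-(j+1) = d-1-j := by omega
    rw [h1, h2, pow_succ]; ring
  rw [Finset.sum_congr rfl e1, Finset.sum_neg_distrib]
  have e0 : i+0+1 = i+1 := by omega
  have e02 : d+1-1-0 = d := by omega
  rw [e0, e02]
  ring

/-- With `R = ℤ[x_1,…,x_k]`, `s_i` the elementary symmetric polynomials, and
`A = R[η]/(η^k + s_1 η^{k-1} + ⋯ + s_k)`, writing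
`η^{d+k-1} = ∑_{i=0}^{k-1} q_{d,i} η^{k-1-i}`, one has
`(-1)^d q_{d,i} = ∑_{j=1}^{d} (-1)^{j-1} s_{i+j} p_{d-j}` where `p_j` is the complete
homogeneous symmetric polynomial of degree `j`. -/
theorem stmt_6 (k : ℕ) (hk : 1 ≤ k) :
    let s : ℕ → MvPolynomial (Fin k) ℤ := fun i => esymm (Fin k) ℤ i
    let f : Polynomial (MvPolynomial (Fin k) ℤ) :=
      Polynomial.X ^ k + ∑ i ∈ range k, Polynomial.C (s (i + 1)) * Polynomial.X ^ (k - 1 - i)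
    let q : ℕ → ℕ → MvPolynomial (Fin k) ℤ := fun d i =>
      ((Polynomial.X ^ (d + k - 1)) %ₘ f).coeff (k - 1 - i)
    ∀ d, 1 ≤ d → ∀ i ≤ k - 1,
      (-1 : MvPolynomial (Fin k) ℤ) ^ d * q d i
        = ∑ j ∈ range d, (-1 : MvPolynomial (Fin k) ℤ) ^ j * s (i + j + 1) * hsymm k (d - 1 - j) := by
  obtain ⟨k', rfl⟩ : ∃ k', k = k' + 1 := ⟨k - 1, by omega⟩
  set K := k' + 1 with hK
  intro s f q
  have hf : f = Polynomial.X ^ K + ∑ i ∈ range K, Polynomial.C (esymm (Fin K) ℤ (i + 1))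
      * Polynomial.X ^ (K - 1 - i) := rfl
  have hmon : f.Monic := by
    rw [hf]; exact Polynomial.monic_X_pow_add (degLT K hk _)
  have hdegf : f.degree = (K : WithBot ℕ) := by
    rw [hf, Polynomial.degree_add_eq_left_of_degree_lt, Polynomial.degree_X_pow]
    rw [Polynomial.degree_X_pow]
    exact degLT K hk _
  have key : ∀ d, 1 ≤ d → Polynomial.X ^ (d + K - 1) %ₘ f
      = ∑ i ∈ range K, Polynomial.C (Qa K d i) * Polynomial.X ^ (K - 1 - i) := by
    intro d hd
    induction d, hd using Nat.le_induction with
    | base =>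
      have h2 : (Polynomial.X : Polynomial (MvPolynomial (Fin K) ℤ)) ^ (1 + K - 1)
          = f + ∑ i ∈ range K, Polynomial.C (Qa K 1 i) * Polynomial.X ^ (K - 1 - i) := by
        have hQ1 : ∀ i ∈ range K, Polynomial.C (Qa K 1 i) * Polynomial.X ^ (K - 1 - i)
            = -(Polynomial.C (esymm (Fin K) ℤ (i+1)) * Polynomial.X ^ (K - 1 - i)) := by
          intro i _
          have : Qa K 1 i = -(esymm (Fin K) ℤ (i+1)) := by
            simp [Qa, hsymm_zero']
          rw [this, map_neg]; ring
        rw [Finset.sum_congr rfl hQ1, Finset.sum_neg_distrib, hf]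
        have : (1 : ℕ) + K - 1 = K := by omega
        rw [this]; ring
      rw [h2, Polynomial.add_modByMonic,
        (Polynomial.modByMonic_eq_zero_iff_dvd hmon).2 dvd_rfl, zero_add,
        (Polynomial.modByMonic_eq_self_iff hmon).2 (by rw [hdegf]; exact degLT K hk _)]
    | succ d hd ih =>
      have hexp : d + 1 + K - 1 = (d + K - 1) + 1 := by omega
      rw [hexp, pow_succ]
      have step1 : ∀ p : Polynomial (MvPolynomial (Fin K) ℤ),
          (p * Polynomial.X) %ₘ f = ((p %ₘ f) * Polynomial.X) %ₘ f := by
        intro p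
        conv_lhs => rw [← Polynomial.modByMonic_add_div p f]
        rw [add_mul, mul_assoc, Polynomial.add_modByMonic,
          (Polynomial.modByMonic_eq_zero_iff_dvd hmon).2 (dvd_mul_right f _), add_zero]
      rw [step1, ih]
      have hsplit : (∑ i ∈ range K, Polynomial.C (Qa K d i) * Polynomial.X ^ (K - 1 - i))
            * Polynomial.X
          = Polynomial.C (Qa K d 0) * f
            + ∑ i ∈ range K, Polynomial.C (Qa K (d+1) i) * Polynomial.X ^ (K - 1 - i) := by
        have hQr : ∀ i ∈ range K, Polynomial.C (Qa K (d+1) i) * Polynomial.X ^ (K - 1 - i)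
            = Polynomial.C (Qa K d (i+1)) * Polynomial.X ^ (K - 1 - i)
              - Polynomial.C (Qa K d 0) * (Polynomial.C (esymm (Fin K) ℤ (i+1))
                * Polynomial.X ^ (K - 1 - i)) := by
          intro i _
          rw [Qrec K d i hd, map_sub, map_mul]
          ring
        rw [Finset.sum_congr rfl hQr, Finset.sum_sub_distrib, hf]
        rw [show ∑ i ∈ range K, Polynomial.C (Qa K d 0) * (Polynomial.C (esymm (Fin K) ℤ (i+1))
          * Polynomial.X ^ (K - 1 - i)) = Polynomial.C (Qa K d 0)
          * ∑ i ∈ range K, Polynomial.C (esymm (Fin K) ℤ (i+1)) * Polynomial.X ^ (K - 1 - i) from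
          (Finset.mul_sum _ _ _).symm]
        -- Now show: (∑_{i<K} C(Qa d i) X^(K-1-i)) * X = C(Qa d 0) * X^K + ∑_{i<K} C(Qa d (i+1)) X^(K-1-i)
        have lhs1 : (∑ i ∈ range K, Polynomial.C (Qa K d i) * Polynomial.X ^ (K - 1 - i))
              * Polynomial.X
            = Polynomial.C (Qa K d 0) * Polynomial.X ^ K
              + ∑ i ∈ range k', Polynomial.C (Qa K d (i+1)) * Polynomial.X ^ (K - 1 - (i+1)) * Polynomial.X := by
          rw [Finset.sum_mul, hK, Finset.sum_range_succ']
          have h0 : Polynomial.C (Qa K d 0) * Polynomial.X ^ (K - 1 - 0) * Polynomial.X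
              = Polynomial.C (Qa K d 0) * Polynomial.X ^ K := by
            rw [show K - 1 - 0 = k' from rfl, mul_assoc, ← pow_succ]
          rw [h0]; ring
        rw [lhs1]
        have rhs1 : ∑ i ∈ range K, Polynomial.C (Qa K d (i+1)) * Polynomial.X ^ (K - 1 - i)
            = ∑ i ∈ range k', Polynomial.C (Qa K d (i+1)) * Polynomial.X ^ (K - 1 - (i+1)) * Polynomial.X := by
          rw [hK, Finset.sum_range_succ, Qtop K d (k'+1) (by omega), map_zero, zero_mul, add_zero]
          refine Finset.sum_congr rfl fun i hi => ?_
          rw [Finset.mem_range] at hi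
          have : K - 1 - (i+1) + 1 = K - 1 - i := by omega
          rw [mul_assoc, ← pow_succ, this]
        rw [rhs1]
        ring
      rw [hsplit, Polynomial.add_modByMonic,
        (Polynomial.modByMonic_eq_zero_iff_dvd hmon).2 (Dvd.intro_left _ rfl), zero_add,
        (Polynomial.modByMonic_eq_self_iff hmon).2 (by rw [hdegf]; exact degLT K hk _)]
  intro d hd i hi
  have hq : q d i = Qa K d i := by
    show (Polynomial.X ^ (d + K - 1) %ₘ f).coeff (K - 1 - i) = _
    rw [key d hd, Polynomial.finset_sum_coeff]
    rw [Finset.sum_eq_single i]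
    · rw [Polynomial.coeff_C_mul, Polynomial.coeff_X_pow, if_pos rfl, mul_one]
    · intro b hb hbne
      rw [Finset.mem_range] at hb
      rw [Polynomial.coeff_C_mul, Polynomial.coeff_X_pow, if_neg (by omega), mul_zero]
    · intro hni
      exact absurd (Finset.mem_range.2 (by omega)) hni
  rw [hq]
  show (-1 : MvPolynomial (Fin K) ℤ)^d * Qa K d i
    = ∑ j ∈ range d, (-1 : MvPolynomial (Fin K) ℤ)^j * esymm (Fin K) ℤ (i+j+1) * _root_.hsymm K (d-1-j)
  rw [Qa, ← mul_assoc, ← mul_pow]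
  norm_num
end

section
/- For nonnegative integers e_1,...,e_k and m, the coefficient of the monomial x_0^m · x_1^{e_1} · ... · x_k^{e_k} in the complete homogeneous symmetric polynomial p_{m + e_1 + ... + e_k}(x_0+x_1, x_0+x_2, ..., x_0+x_k) (viewed as a polynomial in the k+1 variables x_0, x_1, ..., x_k) equals C(m + ∑e_i + k - 1, m). -/
open Finset MvPolynomial

/-- The complete homogeneous symmetric polynomial of degree `d` in `k` variables, evaluated
at `x_0 + x_1, …, x_0 + x_k`, as a polynomial in the `k+1` variables `x_0, x_1, …, x_k`. -/
noncomputable def hshift (k d : ℕ) : MvPolynomial (Fin (k + 1)) ℤ :=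
  ∑ f ∈ Finset.Nat.antidiagonalTuple k d, ∏ i : Fin k, (X 0 + X i.succ) ^ f i

lemma hockey (r m : ℕ) : ∑ s ∈ range (m+1), (r+s).choose s = (r+m+1).choose m := by
  have h1 : ∑ s ∈ range (m+1), (r+s).choose s = ∑ s ∈ range (m+1), (r+s).choose r :=
    Finset.sum_congr rfl fun s _ => Nat.choose_symm_of_eq_add (Nat.add_comm r s)
  rw [h1]
  have h2 : ∑ s ∈ range (m+1), (r+s).choose r = ∑ i ∈ Icc r (r+m), i.choose r := by
    rw [show Icc r (r+m) = Ico r (r+m+1) by rw [Finset.Ico_add_one_right_eq_Icc],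
      Finset.sum_Ico_eq_sum_range]
    have : r+m+1-r = m+1 := by omega
    rw [this]
  rw [h2, Nat.sum_Icc_choose]
  exact Nat.choose_symm_of_eq_add (by omega)

lemma vand (p q : ℕ) : ∀ m, ∑ a ∈ range (m+1), (p+a).choose a * (q+(m-a)).choose (m-a)
    = (p+q+m+1).choose m := by
  induction p with
  | zero =>
    intro m
    simp only [Nat.zero_add, Nat.choose_self, one_mul]
    have : ∑ a ∈ range (m+1), (q+(m-a)).choose (m-a) = ∑ a ∈ range (m+1), (q+a).choose a := by
      rw [← Finset.sum_range_reflect]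
      refine Finset.sum_congr rfl fun a ha => ?_
      rw [mem_range] at ha
      congr 1 <;> omega
    rw [this, hockey]
  | succ p ih =>
    intro m
    have step1 : ∀ a : ℕ, (p+1+a).choose a = ∑ j ∈ range (a+1), (p+j).choose j := by
      intro a; rw [hockey]; congr 1; omega
    calc ∑ a ∈ range (m+1), (p+1+a).choose a * (q+(m-a)).choose (m-a)
        = ∑ a ∈ range (m+1), ∑ j ∈ range (a+1),
            (p+j).choose j * (q+(m-a)).choose (m-a) := by
          refine Finset.sum_congr rfl fun a _ => ?_
          rw [step1, Finset.sum_mul]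
      _ = ∑ s ∈ range (m+1), ∑ j ∈ range (s+1),
            (p+j).choose j * (q+(s-j)).choose (s-j) := by
          rw [Finset.sum_sigma', Finset.sum_sigma']
          refine Finset.sum_nbij' (fun x => ⟨m - x.1 + x.2, x.2⟩)
            (fun x => ⟨m - x.1 + x.2, x.2⟩) ?_ ?_ ?_ ?_ ?_
          · rintro ⟨a, j⟩ h
            simp only [Finset.mem_sigma, mem_range] at h ⊢
            omega
          · rintro ⟨s, j⟩ h
            simp only [Finset.mem_sigma, mem_range] at h ⊢
            omega
          · rintro ⟨a, j⟩ h
            simp only [Finset.mem_sigma, mem_range] at h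
            have : m - (m - a + j) + j = a := by omega
            simp [this]
          · rintro ⟨s, j⟩ h
            simp only [Finset.mem_sigma, mem_range] at h
            have : m - (m - s + j) + j = s := by omega
            simp [this]
          · rintro ⟨a, j⟩ h
            simp only [Finset.mem_sigma, mem_range] at h
            have : m - a + j - j = m - a := by omega
            simp only [this]
      _ = ∑ s ∈ range (m+1), (p+q+s+1).choose s :=
          Finset.sum_congr rfl fun s _ => ih s
      _ = (p+1+q+m+1).choose m := by
          have h1 : ∀ s : ℕ, (p+q+s+1).choose s = (p+q+1+s).choose s := by
            intro s; congr 1; omega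
          simp only [h1, hockey]
          congr 1; omega

lemma tuple_succ_sum (k n : ℕ) (F : (Fin (k+1) → ℕ) → ℕ) :
    ∑ f ∈ Finset.Nat.antidiagonalTuple (k+1) n, F f
      = ∑ ab ∈ Finset.HasAntidiagonal.antidiagonal n, ∑ g ∈ Finset.Nat.antidiagonalTuple k ab.2,
          F (Fin.cons ab.1 g) := by
  rw [Finset.sum_sigma']
  refine (Finset.sum_nbij' (fun (f : Fin (k+1) → ℕ) =>
      (⟨(f 0, ∑ i : Fin k, f i.succ), Fin.tail f⟩ : (_ : ℕ × ℕ) × (Fin k → ℕ)))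
      (fun x => Fin.cons x.1.1 x.2) ?_ ?_ ?_ ?_ ?_)
  · intro f hf
    rw [Finset.Nat.mem_antidiagonalTuple, Fin.sum_univ_succ] at hf
    simp only [Finset.mem_sigma, Finset.Nat.mem_antidiagonalTuple, Finset.HasAntidiagonal.mem_antidiagonal]
    exact ⟨hf, rfl⟩
  · rintro ⟨⟨a, b⟩, g⟩ h
    simp only [Finset.mem_sigma, Finset.Nat.mem_antidiagonalTuple,
      Finset.HasAntidiagonal.mem_antidiagonal] at h ⊢
    rw [Fin.sum_univ_succ]
    simp only [Fin.cons_zero, Fin.cons_succ]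
    rw [h.2, h.1]
  · intro f _
    exact Fin.cons_self_tail f
  · rintro ⟨⟨a, b⟩, g⟩ h
    simp only [Finset.mem_sigma, Finset.Nat.mem_antidiagonalTuple,
      Finset.HasAntidiagonal.mem_antidiagonal] at h
    simp only [Fin.cons_zero, Fin.cons_succ, Sigma.mk.inj_iff, Fin.tail_cons, heq_eq_eq,
      and_true, Prod.mk.injEq, true_and]
    exact h.2
  · intro f _
    rw [Fin.cons_self_tail]

lemma key : ∀ (k : ℕ) (e : Fin (k+1) → ℕ) (m : ℕ),
    ∑ a ∈ Finset.Nat.antidiagonalTuple (k+1) m, ∏ i, (e i + a i).choose (a i)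
      = (m + ∑ i, e i + k).choose m := by
  intro k
  induction k with
  | zero =>
    intro e m
    rw [Finset.Nat.antidiagonalTuple_one, Finset.sum_singleton]
    simp [Fin.sum_univ_one, Nat.add_comm]
  | succ k ih =>
    intro e m
    rw [tuple_succ_sum]
    have inner : ∀ ab ∈ Finset.HasAntidiagonal.antidiagonal m,
        ∑ g ∈ Finset.Nat.antidiagonalTuple (k+1) ab.2,
          ∏ i : Fin (k+2), (e i + (Fin.cons ab.1 g : Fin (k+2) → ℕ) i).choose
            ((Fin.cons ab.1 g : Fin (k+2) → ℕ) i)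
        = (e 0 + ab.1).choose ab.1 * (ab.2 + ∑ i : Fin (k+1), e i.succ + k).choose ab.2 := by
      rintro ⟨a, b⟩ _
      rw [← ih (fun i => e i.succ) b, Finset.mul_sum]
      refine Finset.sum_congr rfl fun g _ => ?_
      rw [Fin.prod_univ_succ]
      simp only [Fin.cons_zero, Fin.cons_succ]
    rw [Finset.sum_congr rfl inner, Finset.Nat.sum_antidiagonal_eq_sum_range_succ_mk]
    have : ∀ a ∈ range (m+1),
        (e 0 + a).choose a * ((m - a) + ∑ i : Fin (k+1), e i.succ + k).choose (m - a)
        = (e 0 + a).choose a * ((∑ i : Fin (k+1), e i.succ + k) + (m - a)).choose (m - a) := by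
      intro a _; congr 2; omega
    rw [Finset.sum_congr rfl this, vand]
    have hs : (∑ i, e i) = e 0 + ∑ i : Fin (k+1), e i.succ := Fin.sum_univ_succ e
    rw [hs]
    congr 1
    omega

lemma prod_single_monomial {ι σ R : Type*} [CommSemiring R] (s : Finset ι) (d : ι → (σ →₀ ℕ)) :
    ∏ i ∈ s, (monomial (d i) (1 : R)) = monomial (∑ i ∈ s, d i) 1 := by
  induction s using Finset.cons_induction with
  | empty => simp
  | cons a s ha ih => rw [Finset.prod_cons, Finset.sum_cons, ih, monomial_mul, one_mul]

lemma exp_eq_iff (k m : ℕ) (e : Fin k → ℕ) (a : ℕ) (h : Fin k → ℕ) :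
    (Finsupp.single (0 : Fin (k+1)) a + ∑ i : Fin k, Finsupp.single i.succ (h i))
      = Finsupp.equivFunOnFinite.symm (Fin.cons m e) ↔ (a = m ∧ ∀ i, h i = e i) := by
  rw [Finsupp.ext_iff]
  constructor
  · intro H
    constructor
    · have := H 0
      simpa [Finsupp.finset_sum_apply, Finsupp.single_apply, Fin.succ_ne_zero, @eq_comm _ 0] using this
    · intro j
      have := H j.succ
      simpa [Finsupp.finset_sum_apply, Finsupp.single_apply, Fin.succ_ne_zero,
        (Fin.succ_ne_zero j).symm, Fin.succ_inj] using this
  · rintro ⟨rfl, H⟩ j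
    induction j using Fin.cases with
    | zero =>
      simp [Finsupp.finset_sum_apply, Finsupp.single_apply, Fin.succ_ne_zero, @eq_comm _ 0]
    | succ j =>
      simp [Finsupp.finset_sum_apply, Finsupp.single_apply, Fin.succ_ne_zero,
        (Fin.succ_ne_zero j).symm, Fin.succ_inj, H j]

lemma term_expand (k : ℕ) (f : Fin k → ℕ) :
    (∏ i : Fin k, (X 0 + X i.succ : MvPolynomial (Fin (k+1)) ℤ) ^ f i)
      = ∑ g ∈ Fintype.piFinset (fun i => range (f i + 1)),
          monomial (Finsupp.single 0 (∑ i, g i) + ∑ i, Finsupp.single i.succ (f i - g i))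
            ((∏ i, (f i).choose (g i) : ℕ) : ℤ) := by
  have h1 : ∀ i : Fin k, (X 0 + X i.succ : MvPolynomial (Fin (k+1)) ℤ) ^ f i
      = ∑ j ∈ range (f i + 1), X 0 ^ j * X i.succ ^ (f i - j)
          * (((f i).choose j : ℕ) : MvPolynomial (Fin (k+1)) ℤ) := by
    intro i; exact add_pow _ _ _
  simp_rw [h1]
  rw [Finset.prod_univ_sum]
  refine Finset.sum_congr rfl fun g _ => ?_
  rw [Finset.prod_mul_distrib, Finset.prod_mul_distrib, Finset.prod_pow_eq_pow_sum]
  simp_rw [X_pow_eq_monomial]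
  rw [prod_single_monomial, monomial_mul, one_mul]
  have : (∏ i : Fin k, (((f i).choose (g i) : ℕ) : MvPolynomial (Fin (k+1)) ℤ))
      = C ((∏ i, (f i).choose (g i) : ℕ) : ℤ) := by
    rw [MvPolynomial.C_eq_coe_nat]
    push_cast
    rfl
  rw [this, mul_comm, C_mul_monomial, mul_one]

lemma coeff_term (k m : ℕ) (e f : Fin k → ℕ) (hf : ∑ i, f i = m + ∑ i, e i) :
    MvPolynomial.coeff (Finsupp.equivFunOnFinite.symm (Fin.cons m e))
      (∏ i : Fin k, (X 0 + X i.succ : MvPolynomial (Fin (k+1)) ℤ) ^ f i)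
    = if ∀ i, e i ≤ f i then ((∏ i, (f i).choose (e i) : ℕ) : ℤ) else 0 := by
  classical
  rw [term_expand, MvPolynomial.coeff_sum]
  simp_rw [MvPolynomial.coeff_monomial, exp_eq_iff]
  by_cases he : ∀ i, e i ≤ f i
  · rw [if_pos he]
    rw [Finset.sum_eq_single_of_mem (fun i => f i - e i)]
    · rw [if_pos]
      · norm_cast
        refine Finset.prod_congr rfl fun i _ => ?_
        exact Nat.choose_symm (he i)
      · constructor
        · show (∑ i : Fin k, (f i - e i)) = m
          rw [Finset.sum_tsub_distrib _ (fun i _ => he i), hf]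
          omega
        · intro i
          show f i - (f i - e i) = e i
          have := he i; omega
    · rw [Fintype.mem_piFinset]
      intro i; rw [mem_range]; omega
    · intro g hg hne
      rw [Fintype.mem_piFinset] at hg
      rw [if_neg]
      rintro ⟨hsum, hco⟩
      refine hne (funext fun i => ?_)
      have h1 := hco i
      have h2 := hg i
      rw [mem_range] at h2
      show g i = f i - e i
      omega
  · rw [if_neg he]
    refine Finset.sum_eq_zero fun g hg => ?_
    rw [if_neg]
    rintro ⟨hsum, hco⟩
    exact he fun i => by have := hco i; omega

lemma nat_sum (k m : ℕ) (e : Fin k → ℕ) :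
    ∑ f ∈ Finset.Nat.antidiagonalTuple k (m + ∑ i, e i),
      (if ∀ i, e i ≤ f i then ∏ i, (f i).choose (e i) else 0)
    = ∑ a ∈ Finset.Nat.antidiagonalTuple k m, ∏ i, (e i + a i).choose (a i) := by
  classical
  rw [← Finset.sum_filter]
  refine Finset.sum_nbij' (fun f i => f i - e i) (fun a i => e i + a i) ?_ ?_ ?_ ?_ ?_
  · intro f hf
    rw [Finset.mem_filter, Finset.Nat.mem_antidiagonalTuple] at hf
    rw [Finset.Nat.mem_antidiagonalTuple]
    rw [Finset.sum_tsub_distrib _ (fun i _ => hf.2 i), hf.1]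
    omega
  · intro a ha
    rw [Finset.Nat.mem_antidiagonalTuple] at ha
    rw [Finset.mem_filter, Finset.Nat.mem_antidiagonalTuple]
    refine ⟨?_, fun i => Nat.le_add_right _ _⟩
    rw [Finset.sum_add_distrib, ha]
    omega
  · intro f hf
    rw [Finset.mem_filter] at hf
    funext i
    have := hf.2 i
    show e i + (f i - e i) = f i
    omega
  · intro a _
    funext i
    show e i + a i - e i = a i
    omega
  · intro f hf
    rw [Finset.mem_filter] at hf
    refine Finset.prod_congr rfl fun i _ => ?_
    have h := hf.2 i
    rw [show e i + (f i - e i) = f i by omega]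
    exact (Nat.choose_symm h).symm

/-- Lemma 3.3 restated: the coefficient of `x_0^m x_1^{e_1} ⋯ x_k^{e_k}` in
`p_{m+∑e_i}(x_0+x_1, …, x_0+x_k)` equals `C(m + ∑ e_i + k - 1, m)`. -/
theorem stmt_8 (k m : ℕ) (hk : 1 ≤ k) (e : Fin k → ℕ) :
    MvPolynomial.coeff (Finsupp.equivFunOnFinite.symm (Fin.cons m e))
        (hshift k (m + ∑ i, e i))
      = ((m + (∑ i, e i) + k - 1).choose m : ℤ) := by
  classical
  rw [hshift, MvPolynomial.coeff_sum]
  have h1 : ∀ f ∈ Finset.Nat.antidiagonalTuple k (m + ∑ i, e i),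
      MvPolynomial.coeff (Finsupp.equivFunOnFinite.symm (Fin.cons m e))
        (∏ i : Fin k, (X 0 + X i.succ : MvPolynomial (Fin (k+1)) ℤ) ^ f i)
      = if ∀ i, e i ≤ f i then ((∏ i, (f i).choose (e i) : ℕ) : ℤ) else 0 :=
    fun f hf => coeff_term k m e f (Finset.Nat.mem_antidiagonalTuple.mp hf)
  rw [Finset.sum_congr rfl h1]
  have h2 : ∑ f ∈ Finset.Nat.antidiagonalTuple k (m + ∑ i, e i),
        (if ∀ i, e i ≤ f i then ((∏ i, (f i).choose (e i) : ℕ) : ℤ) else 0)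
      = ((∑ f ∈ Finset.Nat.antidiagonalTuple k (m + ∑ i, e i),
          if ∀ i, e i ≤ f i then (∏ i, (f i).choose (e i) : ℕ) else 0 : ℕ) : ℤ) := by
    push_cast
    rfl
  rw [h2, nat_sum]
  cases k with
  | zero => omega
  | succ k' =>
    rw [key k' e m]
    norm_cast
end

section
/- For any positive integers d > m+1, the alternating sum ∑_{j=0}^{m+1} (-1)^j C(d,j) C(d-1-j, m+1-j) equals (-1)^{m+1}. Consequently, in the coefficient extraction of the string-equation error term, the coefficient of x_0^{m+1} x_1^{e_1}···x_k^{e_k} in ∑_{j=0}^{d-k} (-1)^j C(d,j) x_0^j p_{d-k-j}(x_0+x_1,...,x_0+x_k) is (-1)^{m+1}, where d = m + ∑ e_i + k + 1. -/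
open Finset MvPolynomial

lemma part1 : ∀ m d : ℕ, m + 1 < d →
    ∑ j ∈ range (m + 2),
        ((-1 : ℤ) ^ j * (d.choose j) * ((d - 1 - j).choose (m + 1 - j)) : ℤ)
      = (-1 : ℤ) ^ (m + 1) := by
  intro m
  induction m with
  | zero =>
    intro d hd
    rw [Finset.sum_range_succ, Finset.sum_range_one]
    norm_num [Nat.choose_one_right]
    omega
  | succ m ih =>
    intro d hd
    rw [show m + 1 + 1 = m + 2 from rfl]
    have hdm : m + 2 ≤ d := by omega
    have hS : ∑ j ∈ range (m + 3),
        ((-1 : ℤ) ^ j * (d.choose j) * ((d - j).choose (m + 2 - j))) = 0 := by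
      have hterm : ∀ j ∈ range (m + 3),
          ((-1 : ℤ) ^ j * (d.choose j) * ((d - j).choose (m + 2 - j)))
            = (d.choose (m+2) : ℤ) * ((-1 : ℤ) ^ j * ((m+2).choose j)) := by
        intro j hj
        rw [Finset.mem_range] at hj
        have := Nat.choose_mul (n := d) (by omega : j ≤ m + 2)
        have hcast : ((d.choose j : ℤ) * ((d - j).choose (m + 2 - j)))
            = (d.choose (m+2) : ℤ) * ((m+2).choose j) := by
          exact_mod_cast congrArg (Nat.cast : ℕ → ℤ) this.symm
        ring_nf
        ring_nf at hcast
        linear_combination ((-1:ℤ))^j * hcast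
      rw [Finset.sum_congr rfl hterm, ← Finset.mul_sum,
        Int.alternating_sum_range_choose_of_ne (by omega : m + 2 ≠ 0), mul_zero]
    rw [Finset.sum_range_succ] at hS
    have hsplit : ∀ j ∈ range (m + 2),
        ((-1 : ℤ) ^ j * (d.choose j) * ((d - j).choose (m + 2 - j)))
          = ((-1 : ℤ) ^ j * (d.choose j) * ((d - 1 - j).choose (m + 1 - j)))
            + ((-1 : ℤ) ^ j * (d.choose j) * ((d - 1 - j).choose (m + 2 - j))) := by
      intro j hj
      rw [Finset.mem_range] at hj
      have e1 : d - j = (d - 1 - j) + 1 := by omega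
      have e2 : m + 2 - j = (m + 1 - j) + 1 := by omega
      rw [e1, e2, Nat.choose_succ_succ]
      simp only [Nat.succ_eq_add_one]
      rw [← e2]
      push_cast
      ring
    rw [Finset.sum_congr rfl hsplit, Finset.sum_add_distrib, ih d (by omega)] at hS
    rw [Finset.sum_range_succ]
    have hlast : m + 2 - (m + 2) = 0 := by omega
    rw [hlast, Nat.choose_zero_right] at hS ⊢
    linear_combination hS


-- Vandermonde for multichoose
lemma mc_vandermonde (n : ℕ) : ∀ m a : ℕ,
    ∑ p ∈ Finset.HasAntidiagonal.antidiagonal a, Nat.multichoose m p.1 * Nat.multichoose n p.2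
      = Nat.multichoose (m + n) a := by
  intro m
  induction m with
  | zero =>
    intro a
    rw [Finset.Nat.sum_antidiagonal_eq_sum_range_succ_mk]
    rw [Finset.sum_eq_single 0]
    · simp
    · intro i hi h0
      cases i with
      | zero => exact absurd rfl h0
      | succ i => simp [Nat.multichoose_zero_succ]
    · simp
  | succ m ihm =>
    intro a
    induction a with
    | zero => simp
    | succ a iha =>
      rw [show m + 1 + n = (m + n) + 1 from by omega, Nat.multichoose_succ_succ, ← ihm (a+1),
        ← show m + 1 + n = (m + n) + 1 from by omega, ← iha]
      rw [Finset.Nat.antidiagonal_succ, Finset.sum_cons, Finset.sum_map,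
        Finset.sum_cons, Finset.sum_map]
      simp only [Function.Embedding.coe_prodMap, Function.Embedding.coeFn_mk,
        Function.Embedding.refl_apply, Prod.map_fst, Prod.map_snd, id_eq,
        Nat.multichoose_zero_right]
      have key : ∀ p : ℕ × ℕ, p ∈ Finset.HasAntidiagonal.antidiagonal a →
          Nat.multichoose (m+1) (Nat.succ p.1) * Nat.multichoose n p.2
            = Nat.multichoose m p.1.succ * Nat.multichoose n p.2
              + Nat.multichoose (m+1) p.1 * Nat.multichoose n p.2 := by
        intro p _
        rw [Nat.multichoose_succ_succ, Nat.add_mul]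
      rw [Finset.sum_congr rfl key, Finset.sum_add_distrib]
      omega

lemma sum_adT_succ {M : Type*} [AddCommMonoid M] (k n : ℕ) (g : (Fin (k+1) → ℕ) → M) :
    ∑ f ∈ Finset.Nat.antidiagonalTuple (k+1) n, g f
      = ∑ p ∈ Finset.HasAntidiagonal.antidiagonal n, ∑ x ∈ Finset.Nat.antidiagonalTuple k p.2,
          g (Fin.cons p.1 x) := by
  rw [Finset.sum_sigma']
  refine Finset.sum_nbij' (i := fun f => (⟨(f 0, ∑ i, f (Fin.succ i)), Fin.tail f⟩ :
      (p : ℕ × ℕ) × (Fin k → ℕ))) (j := fun q => Fin.cons q.1.1 q.2) ?_ ?_ ?_ ?_ ?_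
  · intro f hf
    rw [Finset.Nat.mem_antidiagonalTuple, Fin.sum_univ_succ] at hf
    simp only [Finset.mem_sigma, Finset.HasAntidiagonal.mem_antidiagonal, Finset.Nat.mem_antidiagonalTuple]
    exact ⟨hf, rfl⟩
  · intro q hq
    simp only [Finset.mem_sigma, Finset.HasAntidiagonal.mem_antidiagonal,
      Finset.Nat.mem_antidiagonalTuple] at hq
    rw [Finset.Nat.mem_antidiagonalTuple, Fin.sum_univ_succ]
    simp only [Fin.cons_zero, Fin.cons_succ]
    rw [hq.2]
    exact hq.1
  · intro f hf
    simp [Fin.cons_self_tail]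
  · intro q hq
    simp only [Finset.mem_sigma, Finset.mem_antidiagonal,
      Finset.Nat.mem_antidiagonalTuple] at hq
    refine Sigma.ext ?_ ?_ <;> simp [hq.2]
  · intro f hf
    simp [Fin.cons_self_tail]

lemma sum_adT_choose (k : ℕ) : ∀ (a : ℕ) (e : Fin k → ℕ),
    ∑ g ∈ Finset.Nat.antidiagonalTuple k a, ∏ i, (e i + g i).choose (e i)
      = Nat.multichoose ((∑ i, e i) + k) a := by
  induction k with
  | zero =>
    intro a e
    cases a with
    | zero => simp
    | succ a => simp [Finset.Nat.antidiagonalTuple_zero_succ, Nat.multichoose_zero_succ]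
  | succ k ih =>
    intro a e
    rw [sum_adT_succ]
    have key : ∀ p : ℕ × ℕ, p ∈ Finset.HasAntidiagonal.antidiagonal a →
        (∑ x ∈ Finset.Nat.antidiagonalTuple k p.2,
          ∏ i : Fin (k+1), (e i + (Fin.cons p.1 x : Fin (k+1) → ℕ) i).choose (e i))
        = Nat.multichoose (e 0 + 1) p.1
            * Nat.multichoose ((∑ i, e (Fin.succ i)) + k) p.2 := by
      intro p _
      rw [← ih p.2 (fun i => e (Fin.succ i)), Finset.mul_sum]
      refine Finset.sum_congr rfl fun x _ => ?_
      simp only [Fin.prod_univ_succ, Fin.cons_zero, Fin.cons_succ]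
      rw [Nat.multichoose_eq, show e 0 + 1 + p.1 - 1 = e 0 + p.1 by omega, Nat.choose_symm_add]
    rw [Finset.sum_congr rfl key, mc_vandermonde]
    congr 1
    rw [Fin.sum_univ_succ]
    omega

lemma prod_monomial {σ ι : Type*} (s : Finset ι) (g : ι → (σ →₀ ℕ)) (c : ι → ℤ) :
    (∏ i ∈ s, MvPolynomial.monomial (g i) (c i))
      = MvPolynomial.monomial (∑ i ∈ s, g i) (∏ i ∈ s, c i) := by
  induction s using Finset.cons_induction with
  | empty => simp
  | cons a s ha ih =>
    rw [Finset.prod_cons, Finset.sum_cons, Finset.prod_cons, ih, MvPolynomial.monomial_mul]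

lemma binom_exp {k : ℕ} (s : Fin (k+1)) (n : ℕ) :
    ((MvPolynomial.X 0 + MvPolynomial.X s : MvPolynomial (Fin (k+1)) ℤ)) ^ n
      = ∑ t ∈ Finset.range (n+1),
          MvPolynomial.monomial (Finsupp.single s t + Finsupp.single 0 (n - t))
            ((n.choose t : ℤ)) := by
  rw [add_comm (MvPolynomial.X 0), add_pow]
  refine Finset.sum_congr rfl fun t ht => ?_
  rw [MvPolynomial.X_pow_eq_monomial, MvPolynomial.X_pow_eq_monomial,
    MvPolynomial.monomial_mul, show ((n.choose t : MvPolynomial (Fin (k+1)) ℤ))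
      = MvPolynomial.C ((n.choose t : ℤ)) from (map_natCast MvPolynomial.C (n.choose t)).symm,
    mul_comm, MvPolynomial.C_mul_monomial]
  simp

lemma exp_sum (k : ℕ) (f p : Fin k → ℕ) :
    (∑ i : Fin k, (Finsupp.single (i.succ : Fin (k+1)) (p i)
        + Finsupp.single 0 (f i - p i)))
      = Finsupp.equivFunOnFinite.symm (Fin.cons (∑ i, (f i - p i)) p) := by
  ext j
  rw [Finset.sum_apply']
  induction j using Fin.cases with
  | zero => simp [Finsupp.single_apply, Fin.succ_ne_zero]
  | succ i0 =>
    have h0 : (0 : Fin (k+1)) ≠ i0.succ := (Fin.succ_ne_zero i0).symm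
    simp [Finsupp.single_apply, Fin.succ_ne_zero, Fin.succ_inj, Finset.sum_ite_eq', h0]

lemma coeff_prod_pow {k : ℕ} (f e : Fin k → ℕ) (a : ℕ) :
    MvPolynomial.coeff (Finsupp.equivFunOnFinite.symm (Fin.cons a e))
        (∏ i : Fin k,
          (MvPolynomial.X 0 + MvPolynomial.X i.succ : MvPolynomial (Fin (k+1)) ℤ) ^ f i)
      = if (∀ i, e i ≤ f i) ∧ (∑ i, (f i - e i)) = a
          then (∏ i, ((f i).choose (e i) : ℤ)) else 0 := by
  simp_rw [binom_exp]
  rw [Finset.prod_univ_sum]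
  rw [MvPolynomial.coeff_sum]
  have hterm : ∀ p : Fin k → ℕ,
      MvPolynomial.coeff (Finsupp.equivFunOnFinite.symm (Fin.cons a e))
          (∏ i : Fin k, MvPolynomial.monomial
            (Finsupp.single (i.succ : Fin (k+1)) (p i) + Finsupp.single 0 (f i - p i))
            (((f i).choose (p i) : ℤ)))
        = if p = e ∧ (∑ i, (f i - p i)) = a then (∏ i, ((f i).choose (p i) : ℤ)) else 0 := by
    intro p
    rw [prod_monomial, exp_sum, MvPolynomial.coeff_monomial]
    congr 1
    rw [eq_iff_iff]
    constructor
    · intro h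
      have := Finsupp.equivFunOnFinite.symm.injective h
      have h2 := Fin.cons_inj.mp this
      exact ⟨h2.2, h2.1⟩
    · rintro ⟨rfl, h2⟩
      rw [h2]
  rw [Finset.sum_congr rfl fun p _ => hterm p]
  by_cases hc : (∀ i, e i ≤ f i) ∧ (∑ i, (f i - e i)) = a
  · rw [if_pos hc]
    rw [Finset.sum_eq_single_of_mem e ?_ ?_]
    · rw [if_pos ⟨rfl, hc.2⟩]
    · rw [Fintype.mem_piFinset]
      intro i
      rw [Finset.mem_range, Nat.lt_succ_iff]
      exact hc.1 i
    · intro p _ hne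
      rw [if_neg fun h => hne h.1]
  · rw [if_neg hc]
    refine Finset.sum_eq_zero fun p hp => ?_
    rw [if_neg]
    rintro ⟨rfl, h2⟩
    rw [Fintype.mem_piFinset] at hp
    exact hc ⟨fun i => Nat.lt_succ_iff.mp (Finset.mem_range.mp (hp i)), h2⟩

lemma coeff_hshift (k a : ℕ) (e : Fin k → ℕ) :
    MvPolynomial.coeff (Finsupp.equivFunOnFinite.symm (Fin.cons a e))
        (hshift k (a + ∑ i, e i))
      = (Nat.multichoose ((∑ i, e i) + k) a : ℤ) := by
  rw [hshift, MvPolynomial.coeff_sum]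
  rw [Finset.sum_congr rfl fun f _ => coeff_prod_pow f e a]
  rw [← Finset.sum_filter]
  rw [Finset.sum_nbij' (i := fun f => (fun i => f i - e i : Fin k → ℕ))
    (j := fun g => (fun i => e i + g i : Fin k → ℕ))
    (t := Finset.Nat.antidiagonalTuple k a)
    (g := fun g => ∏ i, ((e i + g i).choose (e i) : ℤ)) ?_ ?_ ?_ ?_ ?_]
  · rw [← sum_adT_choose k a e]
    push_cast
    rfl
  · intro f hf
    rw [Finset.mem_filter, Finset.Nat.mem_antidiagonalTuple] at hf
    rw [Finset.Nat.mem_antidiagonalTuple]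
    exact hf.2.2
  · intro g hg
    rw [Finset.Nat.mem_antidiagonalTuple] at hg
    rw [Finset.mem_filter, Finset.Nat.mem_antidiagonalTuple]
    refine ⟨?_, fun i => Nat.le_add_right _ _, ?_⟩
    · rw [Finset.sum_add_distrib, hg]
      omega
    · simp only [Nat.add_sub_cancel_left]
      exact hg
  · intro f hf
    rw [Finset.mem_filter] at hf
    funext i
    exact Nat.add_sub_cancel' (hf.2.1 i)
  · intro g hg
    funext i
    exact Nat.add_sub_cancel_left _ _
  · intro f hf
    rw [Finset.mem_filter] at hf
    refine Finset.prod_congr rfl fun i _ => ?_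
    rw [Nat.add_sub_cancel' (hf.2.1 i)]

/-- (1) For `d > m+1`, `∑_{j=0}^{m+1} (-1)^j C(d,j) C(d-1-j, m+1-j) = (-1)^{m+1}`.
(2) Consequently, with `d = m + ∑ e_i + k + 1`, the coefficient of
`x_0^{m+1} x_1^{e_1} ⋯ x_k^{e_k}` in
`∑_{j=0}^{d-k} (-1)^j C(d,j) x_0^j p_{d-k-j}(x_0+x_1,…,x_0+x_k)` is `(-1)^{m+1}`. -/

theorem stmt_18 :
    (∀ m d : ℕ, m + 1 < d →
      ∑ j ∈ range (m + 2),
          ((-1 : ℤ) ^ j * (d.choose j) * ((d - 1 - j).choose (m + 1 - j)) : ℤ)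
        = (-1 : ℤ) ^ (m + 1)) ∧
    (∀ k m : ℕ, 1 ≤ k → ∀ e : Fin k → ℕ,
      MvPolynomial.coeff (Finsupp.equivFunOnFinite.symm (Fin.cons (m + 1) e))
          (∑ j ∈ range ((m + (∑ i, e i) + k + 1) - k + 1),
            (-1 : MvPolynomial (Fin (k + 1)) ℤ) ^ j
              * ((m + (∑ i, e i) + k + 1).choose j : MvPolynomial (Fin (k + 1)) ℤ)
              * (X 0) ^ j * hshift k ((m + (∑ i, e i) + k + 1) - k - j))
        = (-1 : ℤ) ^ (m + 1)) := by
  refine ⟨part1, ?_⟩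
  intro k m hk e
  have hDk : m + (∑ i, e i) + k + 1 - k = m + (∑ i, e i) + 1 := by omega
  rw [hDk, MvPolynomial.coeff_sum]
  set E := ∑ i, e i with hE
  set d := m + E + k + 1 with hd
  have key : ∀ j ∈ range (m + E + 1 + 1),
      MvPolynomial.coeff (Finsupp.equivFunOnFinite.symm (Fin.cons (m + 1) e))
        ((-1 : MvPolynomial (Fin (k+1)) ℤ) ^ j
          * (d.choose j : MvPolynomial (Fin (k+1)) ℤ) * X 0 ^ j * hshift k (m + E + 1 - j))
      = if j ≤ m + 1
          then ((-1:ℤ)^j * (d.choose j) * ((d - 1 - j).choose (m + 1 - j))) else 0 := by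
    intro j hj
    rw [Finset.mem_range] at hj
    have hC : ((-1 : MvPolynomial (Fin (k+1)) ℤ) ^ j
          * (d.choose j : MvPolynomial (Fin (k+1)) ℤ) * X 0 ^ j * hshift k (m + E + 1 - j))
        = MvPolynomial.C ((-1:ℤ)^j * (d.choose j : ℤ))
            * (X 0 ^ j * hshift k (m + E + 1 - j)) := by
      rw [map_mul, map_pow, map_neg, map_one, map_natCast]
      ring
    rw [hC, MvPolynomial.coeff_C_mul, MvPolynomial.X_pow_eq_monomial,
      MvPolynomial.coeff_monomial_mul', one_mul]
    by_cases hjm : j ≤ m + 1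
    · rw [if_pos, if_pos hjm]
      · have hsub : (Finsupp.equivFunOnFinite.symm (Fin.cons (m + 1) e) - Finsupp.single 0 j)
            = Finsupp.equivFunOnFinite.symm (Fin.cons (m + 1 - j) e) := by
          ext x
          rw [Finsupp.tsub_apply]
          induction x using Fin.cases with
          | zero => simp [Finsupp.single_apply]
          | succ i0 => simp [Finsupp.single_apply, (Fin.succ_ne_zero i0).symm]
        rw [hsub, show m + E + 1 - j = (m + 1 - j) + E by omega, coeff_hshift,
          Nat.multichoose_eq, show E + k + (m + 1 - j) - 1 = d - 1 - j by omega]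
      · rw [Finsupp.single_le_iff]
        simpa using hjm
    · rw [if_neg, if_neg hjm, mul_zero]
      rw [Finsupp.single_le_iff]
      simpa using hjm
  rw [Finset.sum_congr rfl key]
  rw [← Finset.sum_subset (Finset.range_subset_range.mpr (by omega : m + 2 ≤ m + E + 1 + 1))
    (fun x hx hnx => if_neg (by rw [Finset.mem_range] at hnx; omega))]
  rw [Finset.sum_congr rfl
    (fun j hj => if_pos (by rw [Finset.mem_range] at hj; omega : j ≤ m + 1))]
  exact part1 m d (by omega)
end
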